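/- Let B be a bounded self-adjoint operator on a complex Hilbert space with 0 ≤ B ≤ I, and suppose B is not a projection. Then there exist B₁, B₂ with 0 ≤ B₁, B₂ ≤ I, B = (B₁ + B₂)/2, and B ≠ B₁, B ≠ B₂. -/

import Mathlib

set_option maxHeartbeats 1000000
set_option synthInstance.maxHeartbeats 400000

variable {H : Type*} [NormedAddCommGroup H] [InnerProductSpace ℂ H] [CompleteSpace H]

theorem exists_nontrivial_average_of_not_projection (B : H →L[ℂ] H)
    (hB : B.IsPositive) (hB1 : ((1 : H →L[ℂ] H) - B).IsPositive)
    (hBnp : ¬ IsIdempotentElem B) :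
    ∃ B₁ B₂ : H →L[ℂ] H, B₁.IsPositive ∧ ((1 : H →L[ℂ] H) - B₁).IsPositive ∧
      B₂.IsPositive ∧ ((1 : H →L[ℂ] H) - B₂).IsPositive ∧
      B = (2⁻¹ : ℝ) • (B₁ + B₂) ∧ B ≠ B₁ ∧ B ≠ B₂ := by
  rw [← ContinuousLinearMap.nonneg_iff_isPositive] at hB
  rw [← ContinuousLinearMap.nonneg_iff_isPositive] at hB1
  have hsa : IsSelfAdjoint B := IsSelfAdjoint.of_nonneg hB
  have hsa1 : star ((1 : H →L[ℂ] H) - B) = 1 - B := (IsSelfAdjoint.of_nonneg hB1).star_eq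
  have hs : CFC.sqrt B * CFC.sqrt B = B := CFC.sqrt_mul_sqrt_self B hB
  have hss : star (CFC.sqrt B) = CFC.sqrt B :=
    (IsSelfAdjoint.of_nonneg (CFC.sqrt_nonneg B)).star_eq
  -- key fact : B - B*B is nonneg
  have hkey : (0 : H →L[ℂ] H) ≤ B - B * B := by
    have h := star_left_conjugate_nonneg hB1 (CFC.sqrt B)
    rw [hss] at h
    generalize hgen : CFC.sqrt B = s at h hs
    calc (0 : H →L[ℂ] H) ≤ s * (1 - B) * s := h
    _ = B - B * B := by
        rw [← hs]
        noncomm_ring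
  refine ⟨B + B - B * B, B * B, ?_, ?_, ?_, ?_, ?_, ?_, ?_⟩
  · rw [← ContinuousLinearMap.nonneg_iff_isPositive]
    calc (0 : H →L[ℂ] H) ≤ (B - B * B) + B := add_nonneg hkey hB
    _ = B + B - B * B := by abel
  · rw [← ContinuousLinearMap.nonneg_iff_isPositive]
    have h2 : (1 : H →L[ℂ] H) - (B + B - B * B) = star (1 - B) * (1 - B) := by
      rw [hsa1]
      noncomm_ring
    rw [h2]
    exact star_mul_self_nonneg _
  · rw [← ContinuousLinearMap.nonneg_iff_isPositive]
    have := star_mul_self_nonneg B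
    rwa [hsa.star_eq] at this
  · rw [← ContinuousLinearMap.nonneg_iff_isPositive]
    calc (0 : H →L[ℂ] H) ≤ (B - B * B) + (1 - B) := add_nonneg hkey hB1
    _ = 1 - B * B := by abel
  · have hsum : B + B - B * B + (B * B) = B + B := by abel
    rw [hsum, ← two_smul ℝ B, smul_smul]
    norm_num
  · intro h
    apply hBnp
    have h' : B + B * B = B + B := by
      nth_rewrite 1 [h]
      abel
    exact add_left_cancel h'
  · intro h
    exact hBnp h.symm
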